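/- Consider the real orbit x_0 ∈ (0,1), x_{n+1} = f_ε^{-1}(x_n) for f_ε(x) = (1+ε)x + x^{p+1} + x^{p+2} g_ε(x) with |x g_ε(x)| < 1/2, ε < 1, and f_ε increasing on the interval. Then for all n, 1 ≤ x_n / x_{n+1} ≤ 2 + 2x_0^p ≤ 4, and there is a constant K such that x_n ≤ K n^{-1/p} for all n ∈ ℕ. -/

import Mathlib

/-- For the real backward orbit `x_{n+1} = f_ε^{-1}(x_n)` of
`f_ε(x) = (1+ε)x + x^{p+1} + x^{p+2}g_ε(x)` with `|x g_ε(x)| < 1/2`, `ε < 1`,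
`x_0 ∈ (0,1)`: the ratios satisfy `1 ≤ x_n/x_{n+1} ≤ 2 + 2x_0^p ≤ 4`, and there is a
constant `K` with `x_n ≤ K n^{−1/p}` for all `n ≥ 1`. -/
theorem stmt13 (p : ℕ) (hp : 1 ≤ p) (ε : ℝ) (hε : 0 < ε) (hε1 : ε < 1)
    (g : ℝ → ℝ) (x : ℕ → ℝ)
    (hx0 : 0 < x 0) (hx01 : x 0 < 1)
    (hpos : ∀ n, 0 < x n) (hanti : StrictAnti x)
    (hg : ∀ n, |x (n + 1) * g (x (n + 1))| < 1 / 2)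
    (hrec : ∀ n, x n = (1 + ε) * x (n + 1) +
      x (n + 1) ^ (p + 1) * (1 + x (n + 1) * g (x (n + 1)))) :
    (∀ n, 1 ≤ x n / x (n + 1) ∧ x n / x (n + 1) ≤ 2 + 2 * x 0 ^ p ∧
      2 + 2 * x 0 ^ p ≤ 4) ∧
    ∃ K : ℝ, 0 < K ∧ ∀ n : ℕ, 1 ≤ n → x n ≤ K * (n : ℝ) ^ (-(1 : ℝ) / p) := by
  have hθ : ∀ n, 1/2 < 1 + x (n+1) * g (x (n+1)) ∧ 1 + x (n+1) * g (x (n+1)) < 3/2 := by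
    intro n
    have h := abs_lt.mp (hg n)
    constructor <;> linarith [h.1, h.2]
  have hdiv : ∀ n, x n / x (n+1) = (1+ε) + x (n+1)^p * (1 + x (n+1) * g (x (n+1))) := by
    intro n
    have hb := hpos (n+1)
    field_simp
    rw [hrec n]
    ring
  have hle : ∀ n, x (n+1) ≤ x 0 := fun n => (hanti.antitone (Nat.zero_le (n+1)))
  have hx0p1 : x 0 ^ p ≤ 1 := pow_le_one₀ hx0.le hx01.le
  have hratio : ∀ n, 1 ≤ x n / x (n+1) ∧ x n / x (n+1) ≤ 2 + 2 * x 0 ^ p ∧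
      2 + 2 * x 0 ^ p ≤ 4 := by
    intro n
    have hθn := hθ n
    have hap : 0 ≤ x (n+1)^p := pow_nonneg (hpos _).le _
    have hx0pnn : 0 ≤ x 0 ^ p := pow_nonneg hx0.le _
    have hple : x (n+1)^p ≤ x 0 ^ p := pow_le_pow_left₀ (hpos _).le (hle n) p
    refine ⟨?_, ?_, by linarith⟩
    · rw [hdiv n]
      nlinarith [mul_nonneg hap (by linarith [hθn.1] : (0:ℝ) ≤ 1 + x (n+1) * g (x (n+1)))]
    · rw [hdiv n]
      nlinarith [mul_le_mul_of_nonneg_left hθn.2.le hap]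
  -- ratio ≤ 4 gives x n ≤ 4 * x (n+1)
  have hle4 : ∀ n, x n ≤ 4 * x (n+1) := by
    intro n
    have h := (hratio n).2
    have hb := hpos (n+1)
    have : x n / x (n+1) ≤ 4 := le_trans h.1 h.2
    calc x n = (x n / x (n+1)) * x (n+1) := by field_simp
    _ ≤ 4 * x (n+1) := by nlinarith
  set c : ℝ := (1/2) * (1/4)^(p+1) with hc
  have hcpos : 0 < c := by positivity
  have hdiff : ∀ n, c * (x n)^(p+1) ≤ x n - x (n+1) := by
    intro n
    have hθn := hθ n
    have hA := hpos n
    have hB := hpos (n+1)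
    have ha : x n / 4 ≤ x (n+1) := by linarith [hle4 n]
    have hpow : (x n / 4)^(p+1) ≤ x (n+1)^(p+1) := pow_le_pow_left₀ (by positivity) ha _
    have heq : x n - x (n+1) = ε * x (n+1) + x (n+1)^(p+1) * (1 + x (n+1) * g (x (n+1))) := by
      rw [hrec n]; ring
    have hkey : c * (x n)^(p+1) = (1/2) * (x n / 4)^(p+1) := by
      rw [hc, div_eq_mul_one_div (x n) 4, mul_pow]; ring
    have hBnn : 0 ≤ x (n+1)^(p+1) := pow_nonneg hB.le _
    have h2 : x (n+1)^(p+1) * (1/2) ≤ x (n+1)^(p+1) * (1 + x (n+1) * g (x (n+1))) :=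
      mul_le_mul_of_nonneg_left hθn.1.le hBnn
    have h3 : 0 ≤ ε * x (n+1) := by positivity
    nlinarith [mul_le_mul_of_nonneg_left hpow (by norm_num : (0:ℝ) ≤ 1/2)]
  obtain ⟨q, rfl⟩ : ∃ q, p = q + 1 := ⟨p - 1, (Nat.succ_pred_eq_of_pos hp).symm⟩
  have hstep : ∀ n, 1/(x n)^(q+1) + c ≤ 1/(x (n+1))^(q+1) := by
    intro n
    have hA := hpos n
    have hB := hpos (n+1)
    have hBA : x (n+1) ≤ x n := (hanti (Nat.lt_succ_self n)).le
    have hq : x (n+1)^q ≤ x n ^ q := pow_le_pow_left₀ hB.le hBA q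
    have hqnn : 0 ≤ x (n+1)^q := pow_nonneg hB.le q
    have h1 : (x n - x (n+1)) * x (n+1)^q ≤ x n^(q+1) - x (n+1)^(q+1) := by
      rw [pow_succ, pow_succ]
      nlinarith [mul_le_mul_of_nonneg_right hq hA.le]
    have h2 : c * (x n)^(q+2) ≤ x n - x (n+1) := by
      have := hdiff n
      convert this using 2
    have hApos : 0 < (x n)^(q+1) := pow_pos hA _
    have hBpos : 0 < (x (n+1))^(q+1) := pow_pos hB _
    have hfrac : c ≤ (x n^(q+1) - x (n+1)^(q+1)) / (x n^(q+1) * x (n+1)^(q+1)) := by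
      rw [le_div_iff₀ (by positivity)]
      have t2 : c * (x n^(q+1) * x (n+1)^(q+1)) ≤ c * (x n^(q+1) * (x (n+1)^q * x n)) := by
        rw [pow_succ (x (n+1)) q]
        gcongr
      have t3 : c * (x n^(q+1) * (x (n+1)^q * x n)) = (c * x n^(q+2)) * x (n+1)^q := by
        rw [pow_succ, pow_succ]; ring
      have t4 : (c * x n^(q+2)) * x (n+1)^q ≤ (x n - x (n+1)) * x (n+1)^q :=
        mul_le_mul_of_nonneg_right h2 hqnn
      linarith
    have heq : 1/(x n)^(q+1) + (x n^(q+1) - x (n+1)^(q+1)) / (x n^(q+1) * x (n+1)^(q+1))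
        = 1/(x (n+1))^(q+1) := by
      field_simp
      ring
    linarith
  have hind : ∀ n : ℕ, c * n ≤ 1/(x n)^(q+1) := by
    intro n
    induction n with
    | zero => simp; positivity
    | succ n ih =>
      have := hstep n
      push_cast
      nlinarith
  refine ⟨hratio, (c⁻¹) ^ ((q+1:ℝ)⁻¹), Real.rpow_pos_of_pos (by positivity) _, ?_⟩
  intro n hn
  have hn' : (1:ℝ) ≤ (n:ℝ) := by exact_mod_cast hn
  have hnpos : (0:ℝ) < n := by linarith
  have hcn : 0 < c * n := by positivity
  have hA := hpos n
  have h1 := hind n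
  have h2 : (c*n) * (x n)^(q+1) ≤ 1 := by
    rw [le_div_iff₀ (by positivity : (0:ℝ) < x n ^ (q+1))] at h1
    linarith
  have h3 : (x n)^(q+1) ≤ 1/(c*n) := by
    rw [le_div_iff₀ hcn]
    nlinarith
  have hpne : ((q:ℝ)+1) ≠ 0 := by positivity
  have e : x n = ((x n)^(q+1) : ℝ) ^ (((q:ℝ)+1)⁻¹) := by
    rw [← Real.rpow_natCast (x n) (q+1), ← Real.rpow_mul hA.le]
    push_cast
    rw [mul_inv_cancel₀ hpne, Real.rpow_one]
  have hmono : ((x n)^(q+1) : ℝ) ^ (((q:ℝ)+1)⁻¹) ≤ (1/(c*n)) ^ (((q:ℝ)+1)⁻¹) :=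
    Real.rpow_le_rpow (by positivity) h3 (by positivity)
  have hexp : -(1:ℝ)/(((q+1:ℕ)):ℝ) = -(((q:ℝ)+1)⁻¹) := by push_cast; ring
  have hsplit : (1/(c*n) : ℝ) ^ (((q:ℝ)+1)⁻¹)
      = (c⁻¹) ^ ((q+1:ℝ)⁻¹) * (n:ℝ) ^ (-(1:ℝ)/(q+1:ℕ)) := by
    rw [hexp, Real.rpow_neg hnpos.le, ← Real.inv_rpow hnpos.le,
      ← Real.mul_rpow (by positivity) (by positivity)]
    norm_num [mul_inv, mul_comm]
  calc x n = ((x n)^(q+1) : ℝ) ^ (((q:ℝ)+1)⁻¹) := e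
  _ ≤ (1/(c*n)) ^ (((q:ℝ)+1)⁻¹) := hmono
  _ = (c⁻¹) ^ ((q+1:ℝ)⁻¹) * (n:ℝ) ^ (-(1:ℝ)/(q+1:ℕ)) := hsplit
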